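/- For a function f : ℤⁿ → ℝ (restricted to a product of finite integer intervals), if the cross-difference condition f(x + e_i + e_j) − f(x + e_j) ≤ f(x + e_i) − f(x) holds for all x and all i ≠ j, then for any two points x, y in the domain, f(max(x,y)) + f(min(x,y)) ≤ f(x) + f(y), where max and min are componentwise. -/
import Mathlib

private lemma diff_antitone {n : ℕ} (a b : Fin n → ℤ) (f : (Fin n → ℤ) → ℝ)
    (h : ∀ (z : Fin n → ℤ) (i j : Fin n), i ≠ j →
      (∀ k, a k ≤ z k) → (∀ k, (z + Pi.single i 1 + Pi.single j 1 : Fin n → ℤ) k ≤ b k) →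
      f (z + Pi.single i 1 + Pi.single j 1) - f (z + Pi.single j 1) ≤
        f (z + Pi.single i 1) - f z) :
    ∀ (N : ℕ) (z w : Fin n → ℤ) (i : Fin n), (∀ k, z k ≤ w k) → z i = w i →
      (∑ k, (w k - z k).toNat) = N → (∀ k, a k ≤ z k) →
      (∀ k, (w + Pi.single i 1 : Fin n → ℤ) k ≤ b k) →
      f (w + Pi.single i 1) - f w ≤ f (z + Pi.single i 1) - f z := by
  intro N
  induction N with
  | zero =>
    intro z w i hzw hi hsum ha hb
    have : z = w := by
      funext k
      have h1 := Finset.sum_eq_zero_iff.mp hsum k (Finset.mem_univ k)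
      have h2 := hzw k
      omega
    rw [this]
  | succ N ih =>
    intro z w i hzw hi hsum ha hb
    have hex : ∃ j, z j < w j := by
      by_contra hc
      push_neg at hc
      have : ∑ k, (w k - z k).toNat = 0 := by
        apply Finset.sum_eq_zero
        intro k _
        have := hc k
        omega
      omega
    obtain ⟨j, hj⟩ := hex
    have hij : i ≠ j := by
      intro e; rw [e] at hi; omega
    set u : Fin n → ℤ := w - Pi.single j 1 with hu
    have huk : ∀ k, u k = w k - (if k = j then 1 else 0) := by
      intro k; simp [hu, Pi.single_apply]
    have huj : u j = w j - 1 := by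
      have := huk j; simpa using this
    have hune : ∀ k, k ≠ j → u k = w k := by
      intro k hk
      have := huk k; simp only [if_neg hk] at this; omega
    have hau : ∀ k, a k ≤ u k := by
      intro k
      by_cases hk : k = j
      · have h1 := huk k; simp only [if_pos hk] at h1
        have h2 : z k < w k := by rw [hk]; exact hj
        have := ha k; omega
      · have := hune k hk; have := ha k; have := hzw k; omega
    have hstep := h u i j hij hau (by
      intro k
      have h1 := hb k
      simp only [Pi.add_apply, Pi.single_apply] at h1 ⊢
      have := huk k
      omega)
    have huw : u + Pi.single j 1 = w := by
      funext k
      simp only [Pi.add_apply, Pi.single_apply]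
      have := huk k; omega
    have keyeq : u + Pi.single i 1 + Pi.single j 1 = w + Pi.single i 1 := by
      rw [add_right_comm, huw]
    rw [keyeq, huw] at hstep
    have hzu : ∀ k, z k ≤ u k := by
      intro k
      by_cases hk : k = j
      · subst hk; omega
      · have := hune k hk; have := hzw k; omega
    have hiu : z i = u i := by
      have := hune i hij; omega
    have hsum' : ∑ k, (u k - z k).toNat = N := by
      have hpt : ∀ k, (w k - z k).toNat = (u k - z k).toNat + (if k = j then 1 else 0) := by
        intro k
        have h1 := huk k
        have h2 := hzu k
        by_cases hk : k = j
        · simp only [if_pos hk] at h1 ⊢; omega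
        · simp only [if_neg hk] at h1 ⊢; omega
      rw [Finset.sum_congr rfl (fun k _ => hpt k), Finset.sum_add_distrib] at hsum
      simp only [Finset.sum_ite_eq', Finset.mem_univ, if_true] at hsum
      omega
    have hbu : ∀ k, (u + Pi.single i 1 : Fin n → ℤ) k ≤ b k := by
      intro k
      have h1 := hb k
      simp only [Pi.add_apply] at h1 ⊢
      have := huk k
      omega
    have := ih z u i hzu hiu hsum' ha hbu
    linarith

private lemma diff_antitone_multi {n : ℕ} (a b : Fin n → ℤ) (f : (Fin n → ℤ) → ℝ)
    (h : ∀ (z : Fin n → ℤ) (i j : Fin n), i ≠ j →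
      (∀ k, a k ≤ z k) → (∀ k, (z + Pi.single i 1 + Pi.single j 1 : Fin n → ℤ) k ≤ b k) →
      f (z + Pi.single i 1 + Pi.single j 1) - f (z + Pi.single j 1) ≤
        f (z + Pi.single i 1) - f z) :
    ∀ (N : ℕ) (z w d : Fin n → ℤ), (∀ k, z k ≤ w k) → (∀ k, 0 ≤ d k) →
      (∀ k, d k ≠ 0 → z k = w k) → (∑ k, (d k).toNat) = N →
      (∀ k, a k ≤ z k) → (∀ k, (w + d : Fin n → ℤ) k ≤ b k) →
      f (w + d) - f w ≤ f (z + d) - f z := by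
  intro N
  induction N with
  | zero =>
    intro z w d hzw hd hsupp hsum ha hb
    have : d = 0 := by
      funext k
      have h1 := Finset.sum_eq_zero_iff.mp hsum k (Finset.mem_univ k)
      have h2 := hd k
      simp only [Pi.zero_apply]
      omega
    simp [this]
  | succ N ih =>
    intro z w d hzw hd hsupp hsum ha hb
    have hex : ∃ i, 0 < d i := by
      by_contra hc
      push_neg at hc
      have : ∑ k, (d k).toNat = 0 := by
        apply Finset.sum_eq_zero
        intro k _
        have := hc k; have := hd k
        omega
      omega
    obtain ⟨i, hi⟩ := hex
    set d' : Fin n → ℤ := d - Pi.single i 1 with hd'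
    have hd'k : ∀ k, d' k = d k - (if k = i then 1 else 0) := by
      intro k; simp [hd', Pi.single_apply]
    have hd'nn : ∀ k, 0 ≤ d' k := by
      intro k
      have h1 := hd k; have h2 := hd'k k
      by_cases hk : k = i
      · simp only [if_pos hk] at h2; subst hk; omega
      · simp only [if_neg hk] at h2; omega
    have hsupp' : ∀ k, d' k ≠ 0 → z k = w k := by
      intro k hk
      apply hsupp k
      have h1 := hd'k k; have h2 := hd k
      by_cases hki : k = i
      · subst hki; omega
      · simp only [if_neg hki] at h1; omega
    have hsum' : ∑ k, (d' k).toNat = N := by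
      have hpt : ∀ k, (d k).toNat = (d' k).toNat + (if k = i then 1 else 0) := by
        intro k
        have h1 := hd'k k
        have h2 := hd'nn k
        by_cases hk : k = i
        · simp only [if_pos hk] at h1 ⊢; omega
        · simp only [if_neg hk] at h1 ⊢; omega
      rw [Finset.sum_congr rfl (fun k _ => hpt k), Finset.sum_add_distrib] at hsum
      simp only [Finset.sum_ite_eq', Finset.mem_univ, if_true] at hsum
      omega
    have heq1 : w + d' + Pi.single i 1 = w + d := by
      funext k
      simp only [Pi.add_apply, Pi.single_apply]
      have := hd'k k; omega
    have heq2 : z + d' + Pi.single i 1 = z + d := by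
      funext k
      simp only [Pi.add_apply, Pi.single_apply]
      have := hd'k k; omega
    have hzwd : ∀ k, (z + d') k ≤ (w + d') k := by
      intro k; simp only [Pi.add_apply]; have := hzw k; omega
    have hzwi : (z + d') i = (w + d') i := by
      simp only [Pi.add_apply]
      have := hsupp i (by omega)
      omega
    have hazd : ∀ k, a k ≤ (z + d') k := by
      intro k; simp only [Pi.add_apply]
      have := ha k; have := hd'nn k; omega
    have hbwd : ∀ k, (w + d' + Pi.single i 1 : Fin n → ℤ) k ≤ b k := by
      rw [heq1]; exact hb
    have hstepA := diff_antitone a b f h (∑ k, ((w + d') k - (z + d') k).toNat)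
      (z + d') (w + d') i hzwd hzwi rfl hazd hbwd
    rw [heq1, heq2] at hstepA
    have hbwd' : ∀ k, (w + d' : Fin n → ℤ) k ≤ b k := by
      intro k
      have h1 := hb k
      have h2 := hd'k k
      simp only [Pi.add_apply] at h1 ⊢
      by_cases hk : k = i
      · simp only [if_pos hk] at h2; omega
      · simp only [if_neg hk] at h2; omega
    have hstepB := ih z w d' hzw hd'nn hsupp' hsum' ha hbwd'
    linarith

theorem cross_difference_implies_lattice_submodular {n : ℕ} (a b : Fin n → ℤ)
    (f : (Fin n → ℤ) → ℝ)
    (h : ∀ (z : Fin n → ℤ) (i j : Fin n), i ≠ j →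
      (∀ k, a k ≤ z k) → (∀ k, (z + Pi.single i 1 + Pi.single j 1 : Fin n → ℤ) k ≤ b k) →
      f (z + Pi.single i 1 + Pi.single j 1) - f (z + Pi.single j 1) ≤
        f (z + Pi.single i 1) - f z) :
    ∀ x y : Fin n → ℤ,
      (∀ k, a k ≤ x k ∧ x k ≤ b k) → (∀ k, a k ≤ y k ∧ y k ≤ b k) →
      f (x ⊔ y) + f (x ⊓ y) ≤ f x + f y := by
  intro x y hx hy
  set m : Fin n → ℤ := x ⊓ y with hm
  set d : Fin n → ℤ := x - m with hdd
  have hmk : ∀ k, m k = min (x k) (y k) := by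
    intro k; simp [hm, Pi.inf_apply]
  have hMk : ∀ k, (x ⊔ y) k = max (x k) (y k) := by
    intro k; simp [Pi.sup_apply]
  have hdk : ∀ k, d k = x k - min (x k) (y k) := by
    intro k; simp [hdd, Pi.sub_apply, hmk k]
  have key := diff_antitone_multi a b f h (∑ k, (d k).toNat) m y d
    (fun k => by have := hmk k; omega)
    (fun k => by have := hdk k; omega)
    (fun k hk => by have := hdk k; have := hmk k; omega)
    rfl
    (fun k => by have := (hx k).1; have := (hy k).1; have := hmk k; omega)
    (fun k => by
      have h1 := (hx k).2; have h2 := (hy k).2; have h3 := hdk k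
      simp only [Pi.add_apply]
      omega)
  have e1 : y + d = x ⊔ y := by
    funext k
    have := hdk k; have := hMk k
    simp only [Pi.add_apply]
    omega
  have e2 : m + d = x := by
    funext k
    have := hdk k; have := hmk k
    simp only [Pi.add_apply]
    omega
  rw [e1, e2] at key
  linarith
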